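/- arXiv:1512.08295 — 2 statements merged into one kernel-verified Lean document; each statement's English description precedes it below -/
import Mathlib

section
/- Let w ∈ S_n and let (i_1,…,i_m) and (j_1,…,j_m) be two reduced words for w, i.e. w = s_{i_1}⋯s_{i_m} = s_{j_1}⋯s_{j_m} with m = ℓ(w). Then the composite operators ∂_{i_1}∘∂_{i_2}∘⋯∘∂_{i_m} and ∂_{j_1}∘∂_{j_2}∘⋯∘∂_{j_m} on ℤ[ε_1,…,ε_n] are equal. Hence ∂_w := ∂_{i_1}∘⋯∘∂_{i_m} is well defined, independent of the chosen reduced word. -/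
open MvPolynomial

/-- The adjacent transposition swapping `i` and `i+1` (0-indexed). -/
def sT (n : ℕ) (i : ℕ) : Equiv.Perm (Fin n) :=
  if h : i + 1 < n then Equiv.swap ⟨i, Nat.lt_of_succ_lt h⟩ ⟨i + 1, h⟩ else 1

/-- Product of a word in the simple transpositions. -/
def wordProd (n : ℕ) (l : List ℕ) : Equiv.Perm (Fin n) := (l.map (sT n)).prod

/-- Number of inversions = Coxeter length. -/
def invLen {n : ℕ} (w : Equiv.Perm (Fin n)) : ℕ :=
  (Finset.univ.filter fun p : Fin n × Fin n => p.1 < p.2 ∧ w p.2 < w p.1).card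

open Classical in
/-- The divided difference operator. -/
noncomputable def dd (n : ℕ) (i : ℕ) (f : MvPolynomial (Fin n) ℤ) : MvPolynomial (Fin n) ℤ :=
  if h : i + 1 < n then
    if hd : ∃ g : MvPolynomial (Fin n) ℤ,
        f - rename (⇑(sT n i)) f = (X ⟨i, Nat.lt_of_succ_lt h⟩ - X ⟨i + 1, h⟩) * g
    then hd.choose else 0
  else 0

open Classical in
noncomputable def ddList (n : ℕ) : List ℕ → MvPolynomial (Fin n) ℤ → MvPolynomial (Fin n) ℤ
  | [], f => f
  | i :: t, f => dd n i (ddList n t f)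

def IsReducedWord (n : ℕ) (l : List ℕ) (w : Equiv.Perm (Fin n)) : Prop :=
  (∀ i ∈ l, i + 1 < n) ∧ wordProd n l = w ∧ l.length = invLen w

noncomputable def nest (n : ℕ) :
    List (List ℕ) → List (MvPolynomial (Fin n) ℤ) → MvPolynomial (Fin n) ℤ
  | [], _ => 1
  | _ :: _, [] => 1
  | l :: ls, g :: gs => ddList n l (g * nest n ls gs)

noncomputable def xv (n j : ℕ) : MvPolynomial (Fin n) ℤ := if h : j < n then X ⟨j, h⟩ else 0

section DD
variable {n : ℕ}

open Classical

/-- substitution killing `X a` in favor of `X b` -/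
noncomputable def psi (n : ℕ) (a b : Fin n) : MvPolynomial (Fin n) ℤ →ₐ[ℤ] MvPolynomial (Fin n) ℤ :=
  aeval (fun c => if c = a then X b else X c)

lemma dvd_sub_psi (a b : Fin n) (p : MvPolynomial (Fin n) ℤ) :
    (X a - X b) ∣ (p - psi n a b p) := by
  induction p using MvPolynomial.induction_on with
  | C r => simp [psi]
  | add p q hp hq =>
      have : p + q - psi n a b (p + q) = (p - psi n a b p) + (q - psi n a b q) := by
        rw [map_add]; ring
      rw [this]; exact dvd_add hp hq
  | mul_X p c hp =>
      have : p * X c - psi n a b (p * X c)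
          = (p - psi n a b p) * X c + psi n a b p * (X c - psi n a b (X c)) := by
        rw [map_mul]; ring
      rw [this]
      refine dvd_add (Dvd.dvd.mul_right hp _) (Dvd.dvd.mul_left ?_ _)
      by_cases hc : c = a
      · subst hc; simp [psi]
      · simp [psi, hc]

lemma psi_rename_swap (a b : Fin n) (p : MvPolynomial (Fin n) ℤ) :
    psi n a b (rename (⇑(Equiv.swap a b)) p) = psi n a b p := by
  induction p using MvPolynomial.induction_on with
  | C r => simp
  | add p q hp hq => simp [hp, hq]
  | mul_X p c hp =>
      rw [map_mul, map_mul, rename_X, map_mul, hp]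
      congr 1
      by_cases hca : c = a
      · subst hca; simp [psi, Equiv.swap_apply_left]
      · by_cases hcb : c = b
        · subst hcb; simp [psi, Equiv.swap_apply_right, hca]
        · simp [psi, Equiv.swap_apply_of_ne_of_ne hca hcb, hca, hcb]

lemma dd_exists (h : i + 1 < n) (f : MvPolynomial (Fin n) ℤ) :
    ∃ g : MvPolynomial (Fin n) ℤ,
      f - rename (⇑(sT n i)) f = (X ⟨i, Nat.lt_of_succ_lt h⟩ - X (⟨i + 1, h⟩ : Fin n)) * g := by
  set a : Fin n := ⟨i, Nat.lt_of_succ_lt h⟩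
  set b : Fin n := ⟨i + 1, h⟩
  have hst : sT n i = Equiv.swap a b := by simp [sT, h]; rfl
  have hdvd : (X a - X b) ∣ (f - rename (⇑(sT n i)) f) := by
    have h1 := dvd_sub_psi a b f
    have h2 := dvd_sub_psi a b (rename (⇑(sT n i)) f)
    have h3 : psi n a b (rename (⇑(sT n i)) f) = psi n a b f := by
      rw [hst]; exact psi_rename_swap a b f
    have : f - rename (⇑(sT n i)) f
        = (f - psi n a b f) - (rename (⇑(sT n i)) f - psi n a b (rename (⇑(sT n i)) f)) := by
      rw [h3]; ring
    rw [this]; exact dvd_sub h1 h2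
  obtain ⟨g, hg⟩ := hdvd
  exact ⟨g, hg⟩

lemma dd_spec (h : i + 1 < n) (f : MvPolynomial (Fin n) ℤ) :
    (X ⟨i, Nat.lt_of_succ_lt h⟩ - X (⟨i + 1, h⟩ : Fin n)) * dd n i f
      = f - rename (⇑(sT n i)) f := by
  rw [dd, dif_pos h, dif_pos (dd_exists h f)]
  exact ((dd_exists h f).choose_spec).symm

lemma X_sub_ne (h : i + 1 < n) :
    (X ⟨i, Nat.lt_of_succ_lt h⟩ - X (⟨i + 1, h⟩ : Fin n) : MvPolynomial (Fin n) ℤ) ≠ 0 := by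
  rw [sub_ne_zero]
  intro hXX
  have := MvPolynomial.X_injective (R := ℤ) hXX
  simp [Fin.ext_iff] at this

lemma dd_eq (h : i + 1 < n) {f g : MvPolynomial (Fin n) ℤ}
    (hg : (X ⟨i, Nat.lt_of_succ_lt h⟩ - X (⟨i + 1, h⟩ : Fin n)) * g
      = f - rename (⇑(sT n i)) f) : dd n i f = g :=
  mul_left_cancel₀ (X_sub_ne h) ((dd_spec h f).trans hg.symm)

end DD
section ST
variable {n : ℕ}

lemma sT_eq (h : i + 1 < n) :
    sT n i = Equiv.swap ⟨i, Nat.lt_of_succ_lt h⟩ (⟨i + 1, h⟩ : Fin n) := by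
  simp [sT, h]

lemma sT_mul_self (h : i + 1 < n) : sT n i * sT n i = 1 := by
  rw [sT_eq h]; exact Equiv.swap_mul_self _ _

lemma sT_apply_val (h : i + 1 < n) (x : Fin n) :
    ((sT n i x : Fin n) : ℕ) = if (x : ℕ) = i then i + 1 else if (x : ℕ) = i + 1 then i else x := by
  rw [sT_eq h, Equiv.swap_apply_def]
  split_ifs with h1 h2 h3 h4 h5 h6 <;> simp_all [Fin.ext_iff]

lemma rename_sT_sT (h : i + 1 < n) (p : MvPolynomial (Fin n) ℤ) :
    rename (⇑(sT n i)) (rename (⇑(sT n i)) p) = p := by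
  rw [rename_rename]
  have : (⇑(sT n i) ∘ ⇑(sT n i)) = id := by
    funext x
    have := congrArg (fun (e : Equiv.Perm (Fin n)) => e x) (sT_mul_self h)
    simpa [Equiv.Perm.mul_apply] using this
  rw [this, rename_id, AlgHom.id_apply]

lemma rename_X_sub (h : i + 1 < n) :
    rename (⇑(sT n i)) ((X ⟨i, Nat.lt_of_succ_lt h⟩ - X (⟨i + 1, h⟩ : Fin n)) : MvPolynomial (Fin n) ℤ)
      = -(X ⟨i, Nat.lt_of_succ_lt h⟩ - X (⟨i + 1, h⟩ : Fin n)) := by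
  rw [map_sub, rename_X, rename_X, sT_eq h, Equiv.swap_apply_left, Equiv.swap_apply_right]
  ring

lemma rename_dd (h : i + 1 < n) (f : MvPolynomial (Fin n) ℤ) :
    rename (⇑(sT n i)) (dd n i f) = dd n i f := by
  have spec := dd_spec h f
  have h2 := congrArg (rename (⇑(sT n i))) spec
  rw [map_mul, rename_X_sub h, map_sub, rename_sT_sT h] at h2
  -- h2 : -(Xa - Xb) * rename (dd n i f) = rename f - f
  have h3 : (X ⟨i, Nat.lt_of_succ_lt h⟩ - X (⟨i + 1, h⟩ : Fin n)) * rename (⇑(sT n i)) (dd n i f)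
      = f - rename (⇑(sT n i)) f := by linear_combination -h2
  exact mul_left_cancel₀ (X_sub_ne h) (h3.trans spec.symm)

end ST
section Rel
variable {n : ℕ}

set_option maxHeartbeats 1000000 in
lemma sT_comm (hi : i + 1 < n) (hj : j + 1 < n) (hij : i + 2 ≤ j ∨ j + 2 ≤ i) :
    sT n i * sT n j = sT n j * sT n i := by
  ext x
  simp only [Equiv.Perm.mul_apply, sT_apply_val hi, sT_apply_val hj]
  split_ifs <;> omega

set_option maxHeartbeats 1000000 in
lemma sT_braid (h : i + 2 < n) :
    sT n i * sT n (i + 1) * sT n i = sT n (i + 1) * sT n i * sT n (i + 1) := by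
  have hi : i + 1 < n := Nat.lt_of_succ_lt h
  have hii : (i + 1) + 1 < n := h
  ext x
  simp only [Equiv.Perm.mul_apply, sT_apply_val hi, sT_apply_val hii]
  split_ifs <;> omega

lemma rename_rename_perm (σ τ : Equiv.Perm (Fin n)) (f : MvPolynomial (Fin n) ℤ) :
    rename (⇑σ) (rename (⇑τ) f) = rename (⇑(σ * τ)) f := by
  rw [rename_rename]; rfl

lemma X_sub_ne' (u v : Fin n) (h : u ≠ v) : (X u - X v : MvPolynomial (Fin n) ℤ) ≠ 0 := by
  rw [sub_ne_zero]
  exact fun hXX => h (MvPolynomial.X_injective (R := ℤ) hXX)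

lemma dd_comm (hi : i + 1 < n) (hj : j + 1 < n) (hij : i + 2 ≤ j ∨ j + 2 ≤ i)
    (f : MvPolynomial (Fin n) ℤ) : dd n i (dd n j f) = dd n j (dd n i f) := by
  set a : MvPolynomial (Fin n) ℤ := X ⟨i, Nat.lt_of_succ_lt hi⟩ with ha
  set b : MvPolynomial (Fin n) ℤ := X (⟨i + 1, hi⟩ : Fin n) with hb
  set c : MvPolynomial (Fin n) ℤ := X ⟨j, Nat.lt_of_succ_lt hj⟩ with hc
  set d : MvPolynomial (Fin n) ℤ := X (⟨j + 1, hj⟩ : Fin n) with hd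
  have hfixc : sT n i (⟨j, Nat.lt_of_succ_lt hj⟩ : Fin n) = ⟨j, Nat.lt_of_succ_lt hj⟩ := by
    apply Fin.val_injective; simp only [sT_apply_val hi, Fin.val_mk]; split_ifs <;> omega
  have hfixd : sT n i (⟨j + 1, hj⟩ : Fin n) = ⟨j + 1, hj⟩ := by
    apply Fin.val_injective; simp only [sT_apply_val hi, Fin.val_mk]; split_ifs <;> omega
  have hfixa : sT n j (⟨i, Nat.lt_of_succ_lt hi⟩ : Fin n) = ⟨i, Nat.lt_of_succ_lt hi⟩ := by
    apply Fin.val_injective; simp only [sT_apply_val hj, Fin.val_mk]; split_ifs <;> omega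
  have hfixb : sT n j (⟨i + 1, hi⟩ : Fin n) = ⟨i + 1, hi⟩ := by
    apply Fin.val_injective; simp only [sT_apply_val hj, Fin.val_mk]; split_ifs <;> omega
  have E1 := dd_spec hj f
  have E2 := dd_spec hi (dd n j f)
  have E1' := congrArg (rename (⇑(sT n i))) E1
  rw [map_mul, map_sub, map_sub, rename_X, rename_X, hfixc, hfixd] at E1'
  have F1 := dd_spec hi f
  have F2 := dd_spec hj (dd n i f)
  have F1' := congrArg (rename (⇑(sT n j))) F1
  rw [map_mul, map_sub, map_sub, rename_X, rename_X, hfixa, hfixb] at F1'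
  have hren : rename (⇑(sT n i)) (rename (⇑(sT n j)) f)
      = rename (⇑(sT n j)) (rename (⇑(sT n i)) f) := by
    rw [rename_rename_perm, rename_rename_perm, sT_comm hi hj hij]
  have key : (c - d) * ((a - b) * dd n i (dd n j f))
      = (c - d) * ((a - b) * dd n j (dd n i f)) := by
    linear_combination (c - d) * E2 + E1 - E1' - (a - b) * F2 - F1 + F1' + hren
  have hcd : c - d ≠ 0 := X_sub_ne' _ _ (by simp [Fin.ext_iff])
  have hab : a - b ≠ 0 := X_sub_ne' _ _ (by simp [Fin.ext_iff])
  exact mul_left_cancel₀ hab (mul_left_cancel₀ hcd key)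

end Rel
section Braid
variable {n : ℕ}

lemma fin_mk_ne {n a b : ℕ} (ha : a < n) (hb : b < n) (hab : a ≠ b) :
    (⟨a, ha⟩ : Fin n) ≠ ⟨b, hb⟩ := by
  intro hx
  exact hab (congrArg Fin.val hx)

lemma dd_braid (h : i + 2 < n) (f : MvPolynomial (Fin n) ℤ) :
    dd n i (dd n (i + 1) (dd n i f)) = dd n (i + 1) (dd n i (dd n (i + 1) f)) := by
  have hi : i + 1 < n := Nat.lt_of_succ_lt h
  have hii : (i + 1) + 1 < n := h
  set A : Fin n := ⟨i, Nat.lt_of_succ_lt hi⟩ with hA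
  set B : Fin n := ⟨i + 1, hi⟩ with hB
  set C : Fin n := ⟨(i + 1) + 1, hii⟩ with hC
  have s1A : sT n i A = B := by
    apply Fin.val_injective; simp only [sT_apply_val hi, hA, hB, Fin.val_mk]; split_ifs <;> omega
  have s1B : sT n i B = A := by
    apply Fin.val_injective; simp only [sT_apply_val hi, hA, hB, Fin.val_mk]; split_ifs <;> omega
  have s1C : sT n i C = C := by
    apply Fin.val_injective; simp only [sT_apply_val hi, hC, Fin.val_mk]; split_ifs <;> omega
  have s2A : sT n (i + 1) A = A := by
    apply Fin.val_injective; simp only [sT_apply_val hii, hA, Fin.val_mk]; split_ifs <;> omega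
  have s2B : sT n (i + 1) B = C := by
    apply Fin.val_injective; simp only [sT_apply_val hii, hB, hC, Fin.val_mk]; split_ifs <;> omega
  have s2C : sT n (i + 1) C = B := by
    apply Fin.val_injective; simp only [sT_apply_val hii, hB, hC, Fin.val_mk]; split_ifs <;> omega
  set σ₁ : MvPolynomial (Fin n) ℤ →ₐ[ℤ] MvPolynomial (Fin n) ℤ := rename (⇑(sT n i)) with hσ₁
  set σ₂ : MvPolynomial (Fin n) ℤ →ₐ[ℤ] MvPolynomial (Fin n) ℤ := rename (⇑(sT n (i + 1))) with hσ₂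
  set g₁ : MvPolynomial (Fin n) ℤ := dd n i f with hg₁
  set g₂ : MvPolynomial (Fin n) ℤ := dd n (i + 1) g₁ with hg₂
  set g₃ : MvPolynomial (Fin n) ℤ := dd n i g₂ with hg₃
  set p₁ : MvPolynomial (Fin n) ℤ := dd n (i + 1) f with hp₁
  set p₂ : MvPolynomial (Fin n) ℤ := dd n i p₁ with hp₂
  set p₃ : MvPolynomial (Fin n) ℤ := dd n (i + 1) p₂ with hp₃
  have E1 : (X A - X B) * g₁ = f - σ₁ f := dd_spec hi f
  have E2 : (X B - X C) * g₂ = g₁ - σ₂ g₁ := dd_spec hii g₁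
  have E3 : (X A - X B) * g₃ = g₂ - σ₁ g₂ := dd_spec hi g₂
  have I1 : σ₁ g₁ = g₁ := rename_dd hi f
  have E2' : (X A - X C) * σ₁ g₂ = g₁ - σ₁ (σ₂ g₁) := by
    have h2 := congrArg σ₁ E2
    simp only [hσ₁, map_mul, map_sub, rename_X, s1B, s1C] at h2
    rw [← hσ₁] at h2
    rw [I1] at h2
    exact h2
  have E1' : (X A - X C) * σ₂ g₁ = σ₂ f - σ₂ (σ₁ f) := by
    have h2 := congrArg σ₂ E1
    simp only [hσ₂, map_mul, map_sub, rename_X, s2A, s2B] at h2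
    rw [← hσ₂] at h2
    exact h2
  have E1'' : (X B - X C) * σ₁ (σ₂ g₁) = σ₁ (σ₂ f) - σ₁ (σ₂ (σ₁ f)) := by
    have h2 := congrArg σ₁ E1'
    simp only [hσ₁, map_mul, map_sub, rename_X, s1A, s1C] at h2
    rw [← hσ₁] at h2
    exact h2
  have PL : (X A - X B) * ((X A - X B) * (X B - X C) * (X A - X C) * g₃)
      = (X A - X B) * (f - σ₁ f - σ₂ f + σ₂ (σ₁ f) + σ₁ (σ₂ f) - σ₁ (σ₂ (σ₁ f))) := by
    linear_combination ((X A - X B) * (X B - X C) * (X A - X C)) * E3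
      + ((X A - X B) * (X A - X C)) * E2 - ((X A - X B) * (X B - X C)) * E2'
      + (X A - X C) * E1 - (X B - X C) * E1 - (X A - X B) * E1' + (X A - X B) * E1''
  have F1 : (X B - X C) * p₁ = f - σ₂ f := dd_spec hii f
  have F2 : (X A - X B) * p₂ = p₁ - σ₁ p₁ := dd_spec hi p₁
  have F3 : (X B - X C) * p₃ = p₂ - σ₂ p₂ := dd_spec hii p₂
  have I2 : σ₂ p₁ = p₁ := rename_dd hii f
  have F2' : (X A - X C) * σ₂ p₂ = p₁ - σ₂ (σ₁ p₁) := by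
    have h2 := congrArg σ₂ F2
    simp only [hσ₂, map_mul, map_sub, rename_X, s2A, s2B] at h2
    rw [← hσ₂] at h2
    rw [I2] at h2
    exact h2
  have F1' : (X A - X C) * σ₁ p₁ = σ₁ f - σ₁ (σ₂ f) := by
    have h2 := congrArg σ₁ F1
    simp only [hσ₁, map_mul, map_sub, rename_X, s1B, s1C] at h2
    rw [← hσ₁] at h2
    exact h2
  have F1'' : (X A - X B) * σ₂ (σ₁ p₁) = σ₂ (σ₁ f) - σ₂ (σ₁ (σ₂ f)) := by
    have h2 := congrArg σ₂ F1'
    simp only [hσ₂, map_mul, map_sub, rename_X, s2A, s2C] at h2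
    rw [← hσ₂] at h2
    exact h2
  have PR : (X B - X C) * ((X A - X B) * (X B - X C) * (X A - X C) * p₃)
      = (X B - X C) * (f - σ₂ f - σ₁ f + σ₁ (σ₂ f) + σ₂ (σ₁ f) - σ₂ (σ₁ (σ₂ f))) := by
    linear_combination ((X B - X C) * (X A - X B) * (X A - X C)) * F3
      + ((X B - X C) * (X A - X C)) * F2 - ((X B - X C) * (X A - X B)) * F2'
      + (X A - X C) * F1 - (X A - X B) * F1 - (X B - X C) * F1' + (X B - X C) * F1''
  have hperm : sT n i * (sT n (i + 1) * sT n i) = sT n (i + 1) * (sT n i * sT n (i + 1)) := by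
    simp only [← mul_assoc]
    exact sT_braid h
  have hbr : σ₁ (σ₂ (σ₁ f)) = σ₂ (σ₁ (σ₂ f)) := by
    simp only [hσ₁, hσ₂, rename_rename_perm, mul_assoc, hperm]
  have hab : (X A - X B : MvPolynomial (Fin n) ℤ) ≠ 0 :=
    X_sub_ne' _ _ (fin_mk_ne _ _ (by omega))
  have hbc : (X B - X C : MvPolynomial (Fin n) ℤ) ≠ 0 :=
    X_sub_ne' _ _ (fin_mk_ne _ _ (by omega))
  have hac : (X A - X C : MvPolynomial (Fin n) ℤ) ≠ 0 :=
    X_sub_ne' _ _ (fin_mk_ne _ _ (by omega))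
  have hPL := mul_left_cancel₀ hab PL
  have hPR := mul_left_cancel₀ hbc PR
  have key : (X A - X B) * ((X B - X C) * ((X A - X C) * g₃))
      = (X A - X B) * ((X B - X C) * ((X A - X C) * p₃)) := by
    linear_combination hPL - hPR - hbr
  exact mul_left_cancel₀ hac (mul_left_cancel₀ hbc (mul_left_cancel₀ hab key))

end Braid
section Len
variable {n : ℕ}

lemma sT_inv (h : i + 1 < n) : (sT n i)⁻¹ = sT n i :=
  inv_eq_of_mul_eq_one_left (sT_mul_self h)

lemma invLen_one : invLen (1 : Equiv.Perm (Fin n)) = 0 := by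
  rw [invLen, Finset.card_eq_zero, Finset.filter_eq_empty_iff]
  rintro p - ⟨h1, h2⟩
  simp only [Equiv.Perm.one_apply] at h2
  exact absurd (h1.trans h2) (lt_irrefl _)

lemma invLen_sT_mul_of_desc (h : i + 1 < n) (w : Equiv.Perm (Fin n))
    (hd : w⁻¹ (⟨i + 1, h⟩ : Fin n) < w⁻¹ ⟨i, Nat.lt_of_succ_lt h⟩) :
    invLen (sT n i * w) + 1 = invLen w := by
  classical
  set A : Fin n := ⟨i, Nat.lt_of_succ_lt h⟩ with hA
  set B : Fin n := ⟨i + 1, h⟩ with hB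
  have sTA : sT n i A = B := by
    apply Fin.val_injective; simp only [sT_apply_val h, hA, hB, Fin.val_mk]; split_ifs <;> omega
  have sTB : sT n i B = A := by
    apply Fin.val_injective; simp only [sT_apply_val h, hA, hB, Fin.val_mk]; split_ifs <;> omega
  set x : Fin n × Fin n := (w⁻¹ B, w⁻¹ A) with hxdef
  have hxmem : x ∈ Finset.univ.filter
      (fun p : Fin n × Fin n => p.1 < p.2 ∧ w p.2 < w p.1) := by
    simp only [Finset.mem_filter, Finset.mem_univ, true_and, hxdef]
    refine ⟨hd, ?_⟩
    rw [show w (w⁻¹ B) = B from w.apply_symm_apply B, show w (w⁻¹ A) = A from w.apply_symm_apply A]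
    simp [hA, hB, Fin.lt_def]
  have hset : (Finset.univ.filter
        (fun p : Fin n × Fin n => p.1 < p.2 ∧ (sT n i * w) p.2 < (sT n i * w) p.1))
      = (Finset.univ.filter
        (fun p : Fin n × Fin n => p.1 < p.2 ∧ w p.2 < w p.1)).erase x := by
    ext p
    simp only [Finset.mem_filter, Finset.mem_erase, Finset.mem_univ, true_and]
    have hpx : p = x ↔ w p.1 = B ∧ w p.2 = A := by
      rw [Prod.ext_iff, hxdef]
      constructor
      · rintro ⟨h1, h2⟩
        rw [show p.1 = w⁻¹ B from h1, show p.2 = w⁻¹ A from h2]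
        exact ⟨w.apply_symm_apply B, w.apply_symm_apply A⟩
      · rintro ⟨h1, h2⟩
        constructor
        · rw [← h1]; exact (w.symm_apply_apply p.1).symm
        · rw [← h2]; exact (w.symm_apply_apply p.2).symm
    by_cases hc1 : w p.1 = A ∧ w p.2 = B
    · have h1 : p.1 = w⁻¹ A := by rw [← hc1.1]; exact (w.symm_apply_apply p.1).symm
      have h2 : p.2 = w⁻¹ B := by rw [← hc1.2]; exact (w.symm_apply_apply p.2).symm
      have hnl : ¬ p.1 < p.2 := by
        rw [h1, h2]
        exact fun hlt => absurd (hd.trans hlt) (lt_irrefl _)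
      constructor
      · rintro ⟨hp, -⟩; exact absurd hp hnl
      · rintro ⟨-, hp, -⟩; exact absurd hp hnl
    · by_cases hc2 : w p.1 = B ∧ w p.2 = A
      · constructor
        · rintro ⟨-, hlt⟩
          exfalso
          rw [Equiv.Perm.mul_apply, Equiv.Perm.mul_apply, hc2.1, hc2.2, sTA, sTB] at hlt
          simp only [Fin.lt_def, hA, hB, Fin.val_mk] at hlt
          omega
        · rintro ⟨hpx', -⟩; exact absurd (hpx.2 hc2) hpx'
      · have hne : p ≠ x := fun hp => hc2 (hpx.1 hp)
        have e1 : ¬(((w p.1 : Fin n) : ℕ) = i ∧ ((w p.2 : Fin n) : ℕ) = i + 1) := by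
          rintro ⟨a1, a2⟩
          exact hc1 ⟨Fin.val_injective a1, Fin.val_injective a2⟩
        have e2 : ¬(((w p.1 : Fin n) : ℕ) = i + 1 ∧ ((w p.2 : Fin n) : ℕ) = i) := by
          rintro ⟨a1, a2⟩
          exact hc2 ⟨Fin.val_injective a1, Fin.val_injective a2⟩
        have hcomp : ((sT n i * w) p.2 < (sT n i * w) p.1) ↔ (w p.2 < w p.1) := by
          simp only [Equiv.Perm.mul_apply, Fin.lt_def, sT_apply_val h]
          split_ifs <;> omega
        simp only [hcomp]
        exact ⟨fun hp => ⟨hne, hp⟩, fun hp => hp.2⟩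
  rw [invLen, invLen, hset, Finset.card_erase_of_mem hxmem]
  have hpos := Finset.card_pos.2 ⟨x, hxmem⟩
  omega

lemma invLen_sT_mul_of_asc (h : i + 1 < n) (w : Equiv.Perm (Fin n))
    (ha : w⁻¹ (⟨i, Nat.lt_of_succ_lt h⟩ : Fin n) < w⁻¹ ⟨i + 1, h⟩) :
    invLen (sT n i * w) = invLen w + 1 := by
  have sTA : sT n i ⟨i, Nat.lt_of_succ_lt h⟩ = ⟨i + 1, h⟩ := by
    apply Fin.val_injective; simp only [sT_apply_val h, Fin.val_mk]; split_ifs <;> omega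
  have sTB : sT n i (⟨i + 1, h⟩ : Fin n) = ⟨i, Nat.lt_of_succ_lt h⟩ := by
    apply Fin.val_injective; simp only [sT_apply_val h, Fin.val_mk]; split_ifs <;> omega
  have hinv : (sT n i * w)⁻¹ = w⁻¹ * sT n i := by rw [mul_inv_rev, sT_inv h]
  have hd : (sT n i * w)⁻¹ (⟨i + 1, h⟩ : Fin n) < (sT n i * w)⁻¹ ⟨i, Nat.lt_of_succ_lt h⟩ := by
    rw [hinv]
    simp only [Equiv.Perm.mul_apply, sTA, sTB]
    exact ha
  have := invLen_sT_mul_of_desc h (sT n i * w) hd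
  rw [← mul_assoc, sT_mul_self h, one_mul] at this
  omega

lemma invLen_dichotomy (h : i + 1 < n) (w : Equiv.Perm (Fin n)) :
    (w⁻¹ (⟨i + 1, h⟩ : Fin n) < w⁻¹ ⟨i, Nat.lt_of_succ_lt h⟩ ∧
      invLen (sT n i * w) + 1 = invLen w) ∨
    invLen (sT n i * w) = invLen w + 1 := by
  rcases lt_trichotomy (w⁻¹ (⟨i + 1, h⟩ : Fin n)) (w⁻¹ ⟨i, Nat.lt_of_succ_lt h⟩) with hlt | heq | hgt
  · exact Or.inl ⟨hlt, invLen_sT_mul_of_desc h w hlt⟩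
  · exfalso
    have := w⁻¹.injective heq
    simp [Fin.ext_iff] at this
  · exact Or.inr (invLen_sT_mul_of_asc h w hgt)

lemma wordProd_nil : wordProd n [] = 1 := rfl

lemma wordProd_cons (i : ℕ) (t : List ℕ) :
    wordProd n (i :: t) = sT n i * wordProd n t := by
  simp [wordProd]

lemma invLen_wordProd_le (l : List ℕ) (hl : ∀ k ∈ l, k + 1 < n) :
    invLen (wordProd n l) ≤ l.length := by
  induction l with
  | nil => rw [wordProd_nil, invLen_one]; simp
  | cons i t IHt =>
      have hi : i + 1 < n := hl i List.mem_cons_self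
      have ht : ∀ k ∈ t, k + 1 < n := fun k hk => hl k (List.mem_cons_of_mem i hk)
      rw [wordProd_cons]
      rcases invLen_dichotomy hi (wordProd n t) with ⟨-, hlen⟩ | hlen <;>
        · simp only [List.length_cons]
          have := IHt ht
          omega

/-- from a reduced word with head `i`, get descent + reducedness of tail -/
lemma head_desc {l : List ℕ} {w : Equiv.Perm (Fin n)} {i : ℕ} {t : List ℕ}
    (hl : l = i :: t) (hred : IsReducedWord n l w) :
    ∃ h : i + 1 < n,
      w⁻¹ (⟨i + 1, h⟩ : Fin n) < w⁻¹ ⟨i, Nat.lt_of_succ_lt h⟩ ∧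
      IsReducedWord n t (sT n i * w) := by
  subst hl
  obtain ⟨hb, hprod, hlen⟩ := hred
  have hi : i + 1 < n := hb i List.mem_cons_self
  have ht : ∀ k ∈ t, k + 1 < n := fun k hk => hb k (List.mem_cons_of_mem i hk)
  have hpt : wordProd n t = sT n i * w := by
    rw [← hprod, wordProd_cons, ← mul_assoc, sT_mul_self hi, one_mul]
  have hle : invLen (sT n i * w) ≤ t.length := by
    rw [← hpt]; exact invLen_wordProd_le t ht
  simp only [List.length_cons] at hlen
  rcases invLen_dichotomy hi w with ⟨hdesc, hlen2⟩ | hlen2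
  · exact ⟨hi, hdesc, ht, hpt, by omega⟩
  · omega

/-- permutation with no descents is the identity -/
lemma eq_one_of_no_desc (w : Equiv.Perm (Fin n))
    (hnd : ∀ i, ∀ h : i + 1 < n,
      ¬ w⁻¹ (⟨i + 1, h⟩ : Fin n) < w⁻¹ ⟨i, Nat.lt_of_succ_lt h⟩) : w = 1 := by
  set g : Fin n → Fin n := ⇑w⁻¹ with hg
  have hadj : ∀ i, ∀ h : i + 1 < n, g ⟨i, Nat.lt_of_succ_lt h⟩ < g ⟨i + 1, h⟩ := by
    intro i h
    rcases lt_trichotomy (g ⟨i, Nat.lt_of_succ_lt h⟩) (g ⟨i + 1, h⟩) with hlt | heq | hgt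
    · exact hlt
    · exfalso
      have := w⁻¹.injective heq
      simp [Fin.ext_iff] at this
    · exact absurd hgt (hnd i h)
  have hstep : ∀ m : ℕ, ∀ a b : Fin n, (b : ℕ) = (a : ℕ) + m + 1 → g a < g b := by
    intro m
    induction m with
    | zero =>
        intro a b hab
        have h : (a : ℕ) + 1 < n := by omega
        have ha' : a = ⟨(a : ℕ), a.isLt⟩ := rfl
        have hb' : b = ⟨(a : ℕ) + 1, h⟩ := by apply Fin.val_injective; simpa using hab
        rw [hb']
        have := hadj (a : ℕ) h
        convert this using 2
    | succ m IHm =>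
        intro a b hab
        have hcn : (a : ℕ) + m + 1 < n := by have := b.isLt; omega
        set c : Fin n := ⟨(a : ℕ) + m + 1, hcn⟩ with hc
        have h1 : g a < g c := IHm a c rfl
        have h2 : g c < g b := by
          have h : (a : ℕ) + m + 1 + 1 < n := by have := b.isLt; omega
          have hb' : b = ⟨(a : ℕ) + m + 1 + 1, h⟩ := by apply Fin.val_injective; simp only [Fin.val_mk]; omega
          rw [hb']
          have := hadj ((a : ℕ) + m + 1) h
          convert this using 2
        exact h1.trans h2
  have hmono : StrictMono g := by
    intro a b hab
    rw [Fin.lt_def] at hab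
    exact hstep ((b : ℕ) - (a : ℕ) - 1) a b (by omega)
  have hwmono : StrictMono (⇑w) := by
    intro a b hab
    rcases lt_trichotomy (w a) (w b) with hlt | heq | hgt
    · exact hlt
    · exact absurd (w.injective heq) (ne_of_lt hab)
    · have := hmono hgt
      simp only [hg, Equiv.Perm.inv_def, Equiv.symm_apply_apply] at this
      exact absurd hab (not_lt_of_gt this)
  have hge : ∀ f : Fin n → Fin n, StrictMono f → ∀ m : ℕ, ∀ k : Fin n, (k : ℕ) = m → m ≤ (f k : ℕ) := by
    intro f hf m
    induction m with
    | zero => intro k _; omega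
    | succ m IHm =>
        intro k hk
        have hm : m < n := by omega
        set k' : Fin n := ⟨m, hm⟩ with hk'
        have h1 : m ≤ (f k' : ℕ) := IHm k' rfl
        have h2 : f k' < f k := hf (by rw [Fin.lt_def]; simp only [hk', Fin.val_mk]; omega)
        rw [Fin.lt_def] at h2
        omega
  ext k
  have h1 : (k : ℕ) ≤ (w k : ℕ) := hge (⇑w) hwmono (k : ℕ) k rfl
  have h2 : ((w k : Fin n) : ℕ) ≤ ((g (w k) : Fin n) : ℕ) := hge g hmono ((w k : Fin n) : ℕ) (w k) rfl
  have h3 : g (w k) = k := by simp [hg]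
  rw [h3] at h2
  simp only [Equiv.Perm.one_apply]
  omega

lemma exists_reduced_word (w : Equiv.Perm (Fin n)) : ∃ l, IsReducedWord n l w := by
  generalize hm : invLen w = m
  induction m using Nat.strong_induction_on generalizing w with
  | _ m IH =>
    by_cases hnd : ∀ i, ∀ h : i + 1 < n,
        ¬ w⁻¹ (⟨i + 1, h⟩ : Fin n) < w⁻¹ ⟨i, Nat.lt_of_succ_lt h⟩
    · have hw1 : w = 1 := eq_one_of_no_desc w hnd
      subst hw1
      exact ⟨[], fun k hk => absurd hk List.not_mem_nil, rfl, by rw [invLen_one]; rfl⟩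
    · push_neg at hnd
      obtain ⟨i, h, hd⟩ := hnd
      have hlen := invLen_sT_mul_of_desc h w hd
      have hlt : invLen (sT n i * w) < m := by omega
      obtain ⟨t, htb, htp, htl⟩ := IH (invLen (sT n i * w)) hlt (sT n i * w) rfl
      refine ⟨i :: t, ?_, ?_, ?_⟩
      · intro k hk
        rcases List.mem_cons.1 hk with rfl | hk
        · exact h
        · exact htb k hk
      · rw [wordProd_cons, htp, ← mul_assoc, sT_mul_self h, one_mul]
      · simp only [List.length_cons, htl]
        omega

end Len
section Main
variable {n : ℕ}

lemma ddList_cons (i : ℕ) (t : List ℕ) (f : MvPolynomial (Fin n) ℤ) :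
    ddList n (i :: t) f = dd n i (ddList n t f) := rfl

lemma comm_case {m : ℕ}
    (IH : ∀ m' < m, ∀ (w : Equiv.Perm (Fin n)) (l₁ l₂ : List ℕ), l₁.length = m' →
      IsReducedWord n l₁ w → IsReducedWord n l₂ w →
      ∀ f, ddList n l₁ f = ddList n l₂ f)
    {w : Equiv.Perm (Fin n)} {i j : ℕ} {t₁ t₂ : List ℕ} (hm : invLen w = m)
    (hij : i + 2 ≤ j ∨ j + 2 ≤ i)
    (h₁ : IsReducedWord n (i :: t₁) w) (h₂ : IsReducedWord n (j :: t₂) w)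
    (f : MvPolynomial (Fin n) ℤ) :
    ddList n (i :: t₁) f = ddList n (j :: t₂) f := by
  obtain ⟨hi, hdi, ht₁⟩ := head_desc rfl h₁
  obtain ⟨hj, hdj, ht₂⟩ := head_desc rfl h₂
  have hfix1 : sT n i (⟨j, Nat.lt_of_succ_lt hj⟩ : Fin n) = ⟨j, Nat.lt_of_succ_lt hj⟩ := by
    apply Fin.val_injective; simp only [sT_apply_val hi, Fin.val_mk]; split_ifs <;> omega
  have hfix2 : sT n i (⟨j + 1, hj⟩ : Fin n) = ⟨j + 1, hj⟩ := by
    apply Fin.val_injective; simp only [sT_apply_val hi, Fin.val_mk]; split_ifs <;> omega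
  have hdj' : (sT n i * w)⁻¹ (⟨j + 1, hj⟩ : Fin n) < (sT n i * w)⁻¹ ⟨j, Nat.lt_of_succ_lt hj⟩ := by
    rw [mul_inv_rev, sT_inv hi]
    simp only [Equiv.Perm.mul_apply, hfix1, hfix2]
    exact hdj
  have hu := invLen_sT_mul_of_desc hj (sT n i * w) hdj'
  set u : Equiv.Perm (Fin n) := sT n j * (sT n i * w) with hu_def
  obtain ⟨r, hrb, hrp, hrl⟩ := exists_reduced_word u
  have hlen1 := invLen_sT_mul_of_desc hi w hdi
  have hlen2 := invLen_sT_mul_of_desc hj w hdj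
  have hm1 : (i :: t₁).length = m := by rw [h₁.2.2, hm]
  have hm2 : (j :: t₂).length = m := by rw [h₂.2.2, hm]
  simp only [List.length_cons] at hm1 hm2
  have hjr : IsReducedWord n (j :: r) (sT n i * w) := by
    refine ⟨?_, ?_, ?_⟩
    · intro k hk
      rcases List.mem_cons.1 hk with rfl | hk
      · exact hj
      · exact hrb k hk
    · rw [wordProd_cons, hrp, hu_def, ← mul_assoc, sT_mul_self hj, one_mul]
    · simp only [List.length_cons, hrl]
      omega
  have hprod2 : sT n i * u = sT n j * w := by
    rw [hu_def, ← mul_assoc, ← mul_assoc, sT_comm hi hj hij,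
      mul_assoc (sT n j) (sT n i) (sT n i), sT_mul_self hi, mul_one]
  have hir : IsReducedWord n (i :: r) (sT n j * w) := by
    refine ⟨?_, ?_, ?_⟩
    · intro k hk
      rcases List.mem_cons.1 hk with rfl | hk
      · exact hi
      · exact hrb k hk
    · rw [wordProd_cons, hrp, hprod2]
    · simp only [List.length_cons, hrl]
      omega
  have e1 : ddList n t₁ f = ddList n (j :: r) f :=
    IH t₁.length (by omega) (sT n i * w) t₁ (j :: r) rfl ht₁ hjr f
  have e2 : ddList n t₂ f = ddList n (i :: r) f :=
    IH t₂.length (by omega) (sT n j * w) t₂ (i :: r) rfl ht₂ hir f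
  calc ddList n (i :: t₁) f = dd n i (ddList n t₁ f) := rfl
    _ = dd n i (ddList n (j :: r) f) := by rw [e1]
    _ = dd n i (dd n j (ddList n r f)) := rfl
    _ = dd n j (dd n i (ddList n r f)) := dd_comm hi hj hij _
    _ = dd n j (ddList n (i :: r) f) := rfl
    _ = dd n j (ddList n t₂ f) := by rw [e2]
    _ = ddList n (j :: t₂) f := rfl

lemma braid_case {m : ℕ}
    (IH : ∀ m' < m, ∀ (w : Equiv.Perm (Fin n)) (l₁ l₂ : List ℕ), l₁.length = m' →
      IsReducedWord n l₁ w → IsReducedWord n l₂ w →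
      ∀ f, ddList n l₁ f = ddList n l₂ f)
    {w : Equiv.Perm (Fin n)} {i : ℕ} {t₁ t₂ : List ℕ} (hm : invLen w = m)
    (h₁ : IsReducedWord n (i :: t₁) w) (h₂ : IsReducedWord n ((i + 1) :: t₂) w)
    (f : MvPolynomial (Fin n) ℤ) :
    ddList n (i :: t₁) f = ddList n ((i + 1) :: t₂) f := by
  obtain ⟨hi, hdi, ht₁⟩ := head_desc rfl h₁
  obtain ⟨hj, hdj, ht₂⟩ := head_desc rfl h₂
  -- hj : (i+1)+1 < n
  have s1a : sT n i (⟨i, Nat.lt_of_succ_lt hi⟩ : Fin n) = ⟨i + 1, hi⟩ := by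
    apply Fin.val_injective; simp only [sT_apply_val hi, Fin.val_mk]; split_ifs <;> omega
  have s1b : sT n i (⟨i + 1, Nat.lt_of_succ_lt hj⟩ : Fin n) = ⟨i, Nat.lt_of_succ_lt hi⟩ := by
    apply Fin.val_injective; simp only [sT_apply_val hi, Fin.val_mk]; split_ifs <;> omega
  have s1c : sT n i (⟨i + 1 + 1, hj⟩ : Fin n) = ⟨i + 1 + 1, hj⟩ := by
    apply Fin.val_injective; simp only [sT_apply_val hi, Fin.val_mk]; split_ifs <;> omega
  have s2a : sT n (i + 1) (⟨i, Nat.lt_of_succ_lt hi⟩ : Fin n) = ⟨i, Nat.lt_of_succ_lt hi⟩ := by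
    apply Fin.val_injective; simp only [sT_apply_val hj, Fin.val_mk]; split_ifs <;> omega
  have s2b : sT n (i + 1) (⟨i + 1, Nat.lt_of_succ_lt hj⟩ : Fin n) = ⟨i + 1 + 1, hj⟩ := by
    apply Fin.val_injective; simp only [sT_apply_val hj, Fin.val_mk]; split_ifs <;> omega
  have hd1 : (sT n i * w)⁻¹ (⟨i + 1 + 1, hj⟩ : Fin n)
      < (sT n i * w)⁻¹ ⟨i + 1, Nat.lt_of_succ_lt hj⟩ := by
    rw [mul_inv_rev, sT_inv hi]
    simp only [Equiv.Perm.mul_apply, s1b, s1c]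
    exact hdj.trans hdi
  have hu1 := invLen_sT_mul_of_desc hj (sT n i * w) hd1
  set u2 : Equiv.Perm (Fin n) := sT n (i + 1) * (sT n i * w) with hu2_def
  have hd2 : u2⁻¹ (⟨i + 1, hi⟩ : Fin n) < u2⁻¹ ⟨i, Nat.lt_of_succ_lt hi⟩ := by
    rw [hu2_def, mul_inv_rev, mul_inv_rev, sT_inv hi, sT_inv hj]
    simp only [Equiv.Perm.mul_apply]
    rw [show sT n (i + 1) (⟨i + 1, hi⟩ : Fin n) = ⟨i + 1 + 1, hj⟩ from s2b,
      show sT n (i + 1) (⟨i, Nat.lt_of_succ_lt hi⟩ : Fin n) = ⟨i, Nat.lt_of_succ_lt hi⟩ from s2a,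
      s1c, s1a]
    exact hdj
  have hu2 := invLen_sT_mul_of_desc hi u2 hd2
  set u3 : Equiv.Perm (Fin n) := sT n i * u2 with hu3_def
  obtain ⟨r, hrb, hrp, hrl⟩ := exists_reduced_word u3
  have hlen1 := invLen_sT_mul_of_desc hi w hdi
  have hlen2 := invLen_sT_mul_of_desc hj w hdj
  have hm1 : (i :: t₁).length = m := by rw [h₁.2.2, hm]
  have hm2 : ((i + 1) :: t₂).length = m := by rw [h₂.2.2, hm]
  simp only [List.length_cons] at hm1 hm2
  have c1 : sT n i * u3 = u2 := by
    rw [hu3_def, ← mul_assoc, sT_mul_self hi, one_mul]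
  have c2 : sT n (i + 1) * u2 = sT n i * w := by
    rw [hu2_def, ← mul_assoc, sT_mul_self hj, one_mul]
  have c3 : sT n i * (sT n (i + 1) * u3) = sT n (i + 1) * w := by
    rw [hu3_def, hu2_def]
    simp only [← mul_assoc]
    rw [sT_braid hj, mul_assoc (sT n (i + 1) * sT n i) (sT n (i + 1)) (sT n (i + 1)),
      sT_mul_self hj, mul_one, mul_assoc (sT n (i + 1)) (sT n i) (sT n i),
      sT_mul_self hi, mul_one]
  have hA : IsReducedWord n ((i + 1) :: i :: r) (sT n i * w) := by
    refine ⟨?_, ?_, ?_⟩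
    · intro k hk
      rcases List.mem_cons.1 hk with rfl | hk
      · exact hj
      rcases List.mem_cons.1 hk with rfl | hk
      · exact hi
      · exact hrb k hk
    · rw [wordProd_cons, wordProd_cons, hrp, c1, c2]
    · simp only [List.length_cons, hrl]
      omega
  have hB : IsReducedWord n (i :: (i + 1) :: r) (sT n (i + 1) * w) := by
    refine ⟨?_, ?_, ?_⟩
    · intro k hk
      rcases List.mem_cons.1 hk with rfl | hk
      · exact hi
      rcases List.mem_cons.1 hk with rfl | hk
      · exact hj
      · exact hrb k hk
    · rw [wordProd_cons, wordProd_cons, hrp, c3]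
    · simp only [List.length_cons, hrl]
      omega
  have e1 : ddList n t₁ f = ddList n ((i + 1) :: i :: r) f :=
    IH t₁.length (by omega) (sT n i * w) t₁ ((i + 1) :: i :: r) rfl ht₁ hA f
  have e2 : ddList n t₂ f = ddList n (i :: (i + 1) :: r) f :=
    IH t₂.length (by omega) (sT n (i + 1) * w) t₂ (i :: (i + 1) :: r) rfl ht₂ hB f
  calc ddList n (i :: t₁) f = dd n i (ddList n t₁ f) := rfl
    _ = dd n i (ddList n ((i + 1) :: i :: r) f) := by rw [e1]
    _ = dd n i (dd n (i + 1) (dd n i (ddList n r f))) := rfl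
    _ = dd n (i + 1) (dd n i (dd n (i + 1) (ddList n r f))) := dd_braid hj _
    _ = dd n (i + 1) (ddList n (i :: (i + 1) :: r) f) := rfl
    _ = dd n (i + 1) (ddList n t₂ f) := by rw [e2]
    _ = ddList n ((i + 1) :: t₂) f := rfl

lemma main_aux : ∀ m : ℕ, ∀ (w : Equiv.Perm (Fin n)) (l₁ l₂ : List ℕ), l₁.length = m →
    IsReducedWord n l₁ w → IsReducedWord n l₂ w →
    ∀ f, ddList n l₁ f = ddList n l₂ f := by
  intro m
  induction m using Nat.strong_induction_on with
  | _ m IH =>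
    intro w l₁ l₂ hlen h₁ h₂ f
    cases l₁ with
    | nil =>
        cases l₂ with
        | nil => rfl
        | cons j t₂ =>
            exfalso
            have e1 := h₁.2.2
            have e2 := h₂.2.2
            simp only [List.length_nil, List.length_cons] at e1 e2
            omega
    | cons i t₁ =>
        cases l₂ with
        | nil =>
            exfalso
            have e1 := h₁.2.2
            have e2 := h₂.2.2
            simp only [List.length_nil, List.length_cons] at e1 e2
            omega
        | cons j t₂ =>
            have hm : invLen w = m := by rw [← h₁.2.2, hlen]
            have hm1 : t₁.length + 1 = m := by
              have := h₁.2.2; simp only [List.length_cons] at hlen; omega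
            rcases Nat.lt_trichotomy i j with hlt | heq | hgt
            · rcases Nat.lt_or_ge (i + 1) j with h2 | h2
              · exact comm_case IH hm (Or.inl (by omega)) h₁ h₂ f
              · have hj : j = i + 1 := by omega
                subst hj
                exact braid_case IH hm h₁ h₂ f
            · subst heq
              obtain ⟨hi, hdi, ht₁⟩ := head_desc rfl h₁
              obtain ⟨_, _, ht₂⟩ := head_desc rfl h₂
              have := IH t₁.length (by omega) (sT n i * w) t₁ t₂ rfl ht₁ ht₂ f
              calc ddList n (i :: t₁) f = dd n i (ddList n t₁ f) := rfl
                _ = dd n i (ddList n t₂ f) := by rw [this]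
                _ = ddList n (i :: t₂) f := rfl
            · rcases Nat.lt_or_ge (j + 1) i with h2 | h2
              · exact comm_case IH hm (Or.inr (by omega)) h₁ h₂ f
              · have hij : i = j + 1 := by omega
                subst hij
                exact (braid_case IH hm h₂ h₁ f).symm

end Main


/-- any two reduced words for `w ∈ S_n` give the same composite
divided difference operator `∂_w = ∂_{i_1} ∘ ⋯ ∘ ∂_{i_m}`. -/
theorem stmt1 (n : ℕ) (w : Equiv.Perm (Fin n)) (l₁ l₂ : List ℕ)
    (h₁ : IsReducedWord n l₁ w) (h₂ : IsReducedWord n l₂ w) :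
    ∀ f : MvPolynomial (Fin n) ℤ, ddList n l₁ f = ddList n l₂ f :=
  fun f => main_aux l₁.length w l₁ l₂ rfl h₁ h₂ f
end

section
/- The concatenated word z̄_m z̄_{m−1} ⋯ z̄_1 is a reduced expression for the longest element of the subgroup of S_N generated by {s_n, s_{n+1}, …, s_{n+a−1}}. Similarly, the concatenated word z̄'_m z̄'_{m−1} ⋯ z̄'_1 is a reduced expression for the longest element w_A of the subgroup W_A of S_N generated by A = {s_{n+1},…,s_{n+a−1}}. -/
/-- `b_i = a_1 + ⋯ + a_i` (with `a_{j+1} = as j`). -/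
def bsum (as : ℕ → ℕ) (i : ℕ) : ℕ := ∑ j ∈ Finset.range i, as j

/-- The word `w̄_{i+1} = (s_{k_{i+1}}, …, s_{n−1})`, 0-indexed: letters
`cs i, cs i + 1, …, n − 2` where `cs i = k_{i+1} − 1`. -/
def wbar (n : ℕ) (cs : ℕ → ℕ) (i : ℕ) : List ℕ := List.range' (cs i) (n - 1 - cs i)

/-- The word `z̄_{i+1}`: the concatenation, for `j` running from `b_{i+1} − 1` down to
`b_i`, of the blocks `(s_n, s_{n+1}, …, s_{n+j})` (0-indexed letters
`n − 1, n, …, n − 1 + j`). -/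
def zbar (n : ℕ) (as : ℕ → ℕ) (i : ℕ) : List ℕ :=
  ((List.range (as i)).map fun t => List.range' (n - 1) (bsum as (i + 1) - t)).flatten

/-- The concatenated word `x̄ = w̄_m z̄_m w̄_{m−1} z̄_{m−1} ⋯ w̄_1 z̄_1`. -/
def xbar (n m : ℕ) (cs as : ℕ → ℕ) : List ℕ :=
  ((List.range m).map fun t => wbar n cs (m - 1 - t) ++ zbar n as (m - 1 - t)).flatten

def stair (c k : ℕ) : List ℕ := ((List.range k).map fun t => List.range' c (k - t)).flatten

lemma wordProd_append (n : ℕ) (l1 l2 : List ℕ) :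
    wordProd n (l1 ++ l2) = wordProd n l1 * wordProd n l2 := by
  simp [wordProd]

lemma sT_apply (N i : ℕ) (h : i + 1 < N) (x : Fin N) :
    ((sT N i x : ℕ)) = if (x : ℕ) = i then i + 1 else if (x : ℕ) = i + 1 then i else x := by
  unfold sT
  rw [dif_pos h, Equiv.swap_apply_def, apply_ite (Fin.val), apply_ite (Fin.val)]
  simp only [Fin.ext_iff]

lemma prodRange'_apply (N c : ℕ) : ∀ (j : ℕ), c + j < N → ∀ x : Fin N,
    (wordProd N (List.range' c j) x : ℕ) =
      if c ≤ (x : ℕ) ∧ (x : ℕ) < c + j then (x : ℕ) + 1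
      else if (x : ℕ) = c + j then c else x := by
  intro j
  induction j with
  | zero => intro h x; simp [wordProd]; split_ifs <;> omega
  | succ j ih =>
    intro h x
    rw [List.range'_concat, wordProd_append, Equiv.Perm.mul_apply]
    have h1 : wordProd N [c + 1 * j] x = sT N (c + j) x := by simp [wordProd]
    rw [h1, ih (by omega)]
    have h3 := sT_apply N (c + j) (by omega) x
    have hx := x.isLt
    split_ifs at h3 ⊢ <;> omega

lemma stair_succ (c k : ℕ) : stair c (k + 1) = List.range' c (k + 1) ++ stair c k := by
  unfold stair
  rw [List.range_succ_eq_map, List.map_cons, List.flatten_cons, List.map_map]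
  simp only [Nat.sub_zero, Function.comp]
  congr 2
  apply List.map_congr_left
  intro t _
  simp [Nat.succ_sub_succ]

lemma stairProd_apply (N c : ℕ) : ∀ (k : ℕ), c + k < N → ∀ x : Fin N,
    (wordProd N (stair c k) x : ℕ) =
      if c ≤ (x : ℕ) ∧ (x : ℕ) ≤ c + k then c + k + c - (x : ℕ) else x := by
  intro k
  induction k with
  | zero => intro h x; simp [stair, wordProd]; intros; omega
  | succ k ih =>
    intro h x
    rw [stair_succ, wordProd_append, Equiv.Perm.mul_apply,
      prodRange'_apply N c (k + 1) h (wordProd N (stair c k) x)]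
    have h2 := ih (by omega) x
    have hx := x.isLt
    have hy := (wordProd N (stair c k) x).isLt
    rw [h2] at *
    split_ifs at * <;> omega

/-- card of interval pairs -/
lemma card_interval_pairs (N c k : ℕ) (h : c + k < N) :
    (Finset.univ.filter fun p : Fin N × Fin N =>
        c ≤ (p.1 : ℕ) ∧ (p.1 : ℕ) < (p.2 : ℕ) ∧ (p.2 : ℕ) ≤ c + k).card =
      ∑ j ∈ Finset.range (k + 1), j := by
  have hb : (Finset.univ.filter fun p : Fin N × Fin N =>
        c ≤ (p.1 : ℕ) ∧ (p.1 : ℕ) < (p.2 : ℕ) ∧ (p.2 : ℕ) ≤ c + k).card =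
      ((Finset.range (k + 1)).sigma fun j => Finset.range j).card := by
    apply Finset.card_bij (fun p _ => (⟨(p.2 : ℕ) - c, (p.1 : ℕ) - c⟩ : Σ _ : ℕ, ℕ))
    · intro p hp
      simp only [Finset.mem_filter, Finset.mem_univ, true_and] at hp
      simp only [Finset.mem_sigma, Finset.mem_range]
      omega
    · intro p1 hp1 p2 hp2 he
      simp only [Finset.mem_filter, Finset.mem_univ, true_and] at hp1 hp2
      have he1 : (p1.2 : ℕ) - c = (p2.2 : ℕ) - c := congrArg Sigma.fst he
      have he2 : (p1.1 : ℕ) - c = (p2.1 : ℕ) - c := congrArg Sigma.snd he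
      have : (p1.1 : ℕ) = p2.1 ∧ (p1.2 : ℕ) = p2.2 := by omega
      exact Prod.ext (Fin.ext this.1) (Fin.ext this.2)
    · rintro ⟨j, i⟩ hji
      simp only [Finset.mem_sigma, Finset.mem_range] at hji
      refine ⟨(⟨c + i, by omega⟩, ⟨c + j, by omega⟩), ?_, ?_⟩
      · simp only [Finset.mem_filter, Finset.mem_univ, true_and]
        refine ⟨show c ≤ c + i by omega, show c + i < c + j by omega,
          show c + j ≤ c + k by omega⟩
      · exact Sigma.ext (show c + j - c = j by omega) (heq_of_eq (show c + i - c = i by omega))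
  rw [hb, Finset.card_sigma]
  simp

lemma invLen_stair (N c k : ℕ) (h : c + k < N) :
    invLen (wordProd N (stair c k)) = ∑ j ∈ Finset.range (k + 1), j := by
  rw [invLen, ← card_interval_pairs N c k h]
  congr 1
  apply Finset.filter_congr
  intro p _
  have h1 := stairProd_apply N c k h p.1
  have h2 := stairProd_apply N c k h p.2
  have hx := p.1.isLt
  have hy := p.2.isLt
  simp only [Fin.lt_def]
  constructor
  · rintro ⟨hlt, hinv⟩
    rw [h1, h2] at hinv
    split_ifs at hinv <;> omega
  · rintro ⟨h1', h2', h3'⟩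
    refine ⟨h2', ?_⟩
    rw [h1, h2]
    split_ifs <;> omega

lemma closure_fixes (N c k : ℕ) (h : c + k < N) (u : Equiv.Perm (Fin N))
    (hu : u ∈ Subgroup.closure ((fun i => sT N i) '' {i : ℕ | c ≤ i ∧ i + 1 ≤ c + k})) :
    ∀ x : Fin N, ((x : ℕ) < c ∨ c + k < (x : ℕ)) → u x = x := by
  induction hu using Subgroup.closure_induction with
  | mem g hg =>
    obtain ⟨i, hi, rfl⟩ := hg
    intro x hx
    simp only [Set.mem_setOf_eq] at hi
    have hiN : i + 1 < N := by omega
    show sT N i x = x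
    unfold sT
    rw [dif_pos hiN]
    apply Equiv.swap_apply_of_ne_of_ne
    · exact Fin.ne_of_val_ne (show (x : ℕ) ≠ i by omega)
    · exact Fin.ne_of_val_ne (show (x : ℕ) ≠ i + 1 by omega)
  | one => intro x _; rfl
  | mul a b _ _ ha hb => intro x hx; simp [Equiv.Perm.mul_apply, hb x hx, ha x hx]
  | inv a _ ha =>
    intro x hx
    have := ha x hx
    conv_lhs => rw [← this]
    exact a.symm_apply_apply x

lemma invLen_le (N c k : ℕ) (h : c + k < N) (u : Equiv.Perm (Fin N))
    (hu : u ∈ Subgroup.closure ((fun i => sT N i) '' {i : ℕ | c ≤ i ∧ i + 1 ≤ c + k})) :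
    invLen u ≤ ∑ j ∈ Finset.range (k + 1), j := by
  have hfix := closure_fixes N c k h u hu
  have hstab : ∀ x : Fin N, c ≤ (x : ℕ) → (x : ℕ) ≤ c + k →
      c ≤ (u x : ℕ) ∧ (u x : ℕ) ≤ c + k := by
    intro x h1 h2
    by_contra hc
    push_neg at hc
    have hout : ((u x : ℕ) < c ∨ c + k < (u x : ℕ)) := by omega
    have := hfix (u x) hout
    have := u.injective this
    rw [this] at hout
    omega
  rw [invLen, ← card_interval_pairs N c k h]
  apply Finset.card_le_card
  intro p hp
  simp only [Finset.mem_filter, Finset.mem_univ, true_and] at hp ⊢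
  obtain ⟨hlt, hinv⟩ := hp
  have hlt' : (p.1 : ℕ) < (p.2 : ℕ) := Fin.lt_def.mp hlt
  have hinv' : (u p.2 : ℕ) < (u p.1 : ℕ) := Fin.lt_def.mp hinv
  refine ⟨?_, hlt', ?_⟩
  · by_contra hc
    push_neg at hc
    have e1 : u p.1 = p.1 := hfix p.1 (Or.inl hc)
    have e1' : (u p.1 : ℕ) = (p.1 : ℕ) := congrArg Fin.val e1
    rcases lt_or_ge ((p.2 : ℕ)) c with h2 | h2
    · have e2' : (u p.2 : ℕ) = (p.2 : ℕ) := congrArg Fin.val (hfix p.2 (Or.inl h2))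
      omega
    · rcases le_or_gt ((p.2 : ℕ)) (c + k) with h3 | h3
      · have := hstab p.2 h2 h3
        omega
      · have e2' : (u p.2 : ℕ) = (p.2 : ℕ) := congrArg Fin.val (hfix p.2 (Or.inr h3))
        omega
  · by_contra hc
    push_neg at hc
    have e2' : (u p.2 : ℕ) = (p.2 : ℕ) := congrArg Fin.val (hfix p.2 (Or.inr hc))
    rcases lt_or_ge ((p.1 : ℕ)) c with h1 | h1
    · have e1' : (u p.1 : ℕ) = (p.1 : ℕ) := congrArg Fin.val (hfix p.1 (Or.inl h1))
      omega
    · rcases le_or_gt ((p.1 : ℕ)) (c + k) with h3 | h3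
      · have := hstab p.1 h1 h3
        omega
      · have e1' : (u p.1 : ℕ) = (p.1 : ℕ) := congrArg Fin.val (hfix p.1 (Or.inr h3))
        omega

lemma stair_mem_closure (N c k : ℕ) :
    wordProd N (stair c k) ∈
      Subgroup.closure ((fun i => sT N i) '' {i : ℕ | c ≤ i ∧ i + 1 ≤ c + k}) := by
  apply Subgroup.list_prod_mem
  intro g hg
  simp only [List.mem_map] at hg
  obtain ⟨i, hi, rfl⟩ := hg
  apply Subgroup.subset_closure
  refine ⟨i, ?_, rfl⟩
  simp only [stair, List.mem_flatten, List.mem_map] at hi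
  obtain ⟨l, ⟨t, ht, rfl⟩, hil⟩ := hi
  rw [List.mem_range'_1] at hil
  rw [List.mem_range] at ht
  simp only [Set.mem_setOf_eq]
  omega

lemma list_sum_range (f : ℕ → ℕ) (k : ℕ) :
    ((List.range k).map f).sum = ∑ t ∈ Finset.range k, f t := by
  induction k with
  | zero => simp
  | succ k ih =>
    rw [List.range_succ, List.map_append, List.sum_append, Finset.sum_range_succ, ih]
    simp

lemma length_stair (c k : ℕ) : (stair c k).length = ∑ j ∈ Finset.range (k + 1), j := by
  rw [stair, List.length_flatten, List.map_map]
  have : ((List.range k).map (List.length ∘ fun t => List.range' c (k - t))).sum =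
      ∑ t ∈ Finset.range k, (k - t) := by
    rw [← list_sum_range fun t => k - t]
    congr 1
    apply List.map_congr_left
    intro t _
    simp
  rw [this, Finset.sum_range_succ']
  rw [← Finset.sum_range_reflect]
  apply Finset.sum_congr rfl
  intro j hj
  rw [Finset.mem_range] at hj
  omega

lemma stair_add (c b d : ℕ) :
    stair c (b + d) =
      ((List.range d).map fun t => List.range' c (b + d - t)).flatten ++ stair c b := by
  unfold stair
  rw [show b + d = d + b by omega, List.range_add, List.map_append, List.flatten_append,
    List.map_map]
  congr 1
  congr 1
  apply List.map_congr_left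
  intro s hs
  rw [List.mem_range] at hs
  simp only [Function.comp_apply]
  have : d + b - (d + s) = b - s := by omega
  rw [this]

lemma zbar_concat (n : ℕ) (as : ℕ → ℕ) : ∀ m : ℕ,
    ((List.range m).map fun t => zbar n as (m - 1 - t)).flatten = stair (n - 1) (bsum as m) := by
  intro m
  induction m with
  | zero => simp [stair, bsum]
  | succ m ih =>
    rw [List.range_succ_eq_map, List.map_cons, List.flatten_cons, List.map_map]
    have e1 : (List.map ((fun t => zbar n as (m + 1 - 1 - t)) ∘ Nat.succ) (List.range m)) =
        List.map (fun t => zbar n as (m - 1 - t)) (List.range m) := by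
      apply List.map_congr_left
      intro t _
      simp only [Function.comp]
      congr 1
      omega
    rw [e1, ih]
    have e2 : bsum as (m + 1) = bsum as m + as m := Finset.sum_range_succ as m
    rw [e2, stair_add (n - 1) (bsum as m) (as m)]
    have e3 : m + 1 - 1 - 0 = m := by omega
    rw [e3]
    congr 1
    rw [zbar, e2]

lemma filter_range' (c j : ℕ) :
    (List.range' c (j + 1)).filter (fun x => x ≠ c) = List.range' (c + 1) j := by
  rw [List.range'_succ, List.filter_cons]
  have h1 : (decide ¬c = c) = false := by simp
  rw [h1]
  simp only [Bool.false_eq_true, if_false]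
  apply List.filter_eq_self.mpr
  intro a ha
  rw [List.mem_range'_1] at ha
  simp only [ne_eq, decide_eq_true_eq]
  omega

lemma stair_filter (c : ℕ) : ∀ k : ℕ,
    (stair c k).filter (fun x => x ≠ c) = stair (c + 1) (k - 1) := by
  intro k
  induction k with
  | zero => simp [stair]
  | succ k ih =>
    rw [stair_succ, List.filter_append, filter_range', ih]
    cases k with
    | zero => simp [stair]
    | succ j =>
      rw [Nat.succ_sub_one, Nat.succ_sub_one, ← stair_succ]

/-- `z̄_m z̄_{m−1} ⋯ z̄_1` is a reduced expression for the longest element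
of the subgroup of `S_N` generated by `{s_n,…,s_{n+a−1}}` (0-indexed letters `t` with
`n − 1 ≤ t` and `t + 2 ≤ n + a`), and the word `z̄'_m ⋯ z̄'_1` obtained by deleting all
occurrences of `s_n` (letter `n − 1`) is a reduced expression for the longest element
`w_A` of `W_A`, the subgroup generated by `A = {s_{n+1},…,s_{n+a−1}}`. -/
theorem stmt14 (n m : ℕ) (hn : 2 ≤ n) (hm : 1 ≤ m) (as : ℕ → ℕ)
    (hpos : ∀ i < m, 0 < as i) (N : ℕ) (hN : N = n + bsum as m) :
    (invLen (wordProd N (((List.range m).map fun t => zbar n as (m - 1 - t)).flatten)) =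
        (((List.range m).map fun t => zbar n as (m - 1 - t)).flatten).length ∧
      wordProd N (((List.range m).map fun t => zbar n as (m - 1 - t)).flatten) ∈
        Subgroup.closure
          ((fun i => sT N i) '' {i : ℕ | n - 1 ≤ i ∧ i + 2 ≤ n + bsum as m}) ∧
      ∀ u ∈ Subgroup.closure
          ((fun i => sT N i) '' {i : ℕ | n - 1 ≤ i ∧ i + 2 ≤ n + bsum as m}),
        invLen u ≤
          invLen (wordProd N (((List.range m).map fun t => zbar n as (m - 1 - t)).flatten)))
    ∧
    (invLen (wordProd N
          (((List.range m).map fun t =>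
            (zbar n as (m - 1 - t)).filter fun x => x ≠ n - 1).flatten)) =
        ((((List.range m).map fun t =>
            (zbar n as (m - 1 - t)).filter fun x => x ≠ n - 1).flatten)).length ∧
      wordProd N (((List.range m).map fun t =>
            (zbar n as (m - 1 - t)).filter fun x => x ≠ n - 1).flatten) ∈
        Subgroup.closure
          ((fun i => sT N i) '' {i : ℕ | n ≤ i ∧ i + 2 ≤ n + bsum as m}) ∧
      ∀ u ∈ Subgroup.closure
          ((fun i => sT N i) '' {i : ℕ | n ≤ i ∧ i + 2 ≤ n + bsum as m}),
        invLen u ≤ invLen (wordProd N (((List.range m).map fun t =>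
            (zbar n as (m - 1 - t)).filter fun x => x ≠ n - 1).flatten))) := by
  subst hN
  have hapos : 0 < bsum as m := by
    rw [bsum]
    apply Finset.sum_pos
    · intro i hi
      exact hpos i (Finset.mem_range.mp hi)
    · exact ⟨0, Finset.mem_range.mpr hm⟩
  have hword1 : ((List.range m).map fun t => zbar n as (m - 1 - t)).flatten =
      stair (n - 1) (bsum as m) := zbar_concat n as m
  have hword2 : ((List.range m).map fun t =>
      (zbar n as (m - 1 - t)).filter fun x => x ≠ n - 1).flatten =
      stair n (bsum as m - 1) := by
    have e : ((List.range m).map fun t =>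
        (zbar n as (m - 1 - t)).filter fun x => x ≠ n - 1).flatten =
        (((List.range m).map fun t => zbar n as (m - 1 - t)).flatten).filter
          fun x => x ≠ n - 1 := by
      rw [List.filter_flatten, List.map_map]
      rfl
    rw [e, hword1, stair_filter]
    have e2 : n - 1 + 1 = n := by omega
    rw [e2]
  have hset1 : {i : ℕ | n - 1 ≤ i ∧ i + 2 ≤ n + bsum as m} =
      {i : ℕ | n - 1 ≤ i ∧ i + 1 ≤ (n - 1) + bsum as m} := by
    ext i; simp only [Set.mem_setOf_eq]; omega
  have hset2 : {i : ℕ | n ≤ i ∧ i + 2 ≤ n + bsum as m} =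
      {i : ℕ | n ≤ i ∧ i + 1 ≤ n + (bsum as m - 1)} := by
    ext i; simp only [Set.mem_setOf_eq]; omega
  constructor
  · rw [hword1, hset1]
    have hck : (n - 1) + bsum as m < n + bsum as m := by omega
    refine ⟨?_, stair_mem_closure _ _ _, ?_⟩
    · rw [invLen_stair _ _ _ hck, length_stair]
    · intro u hu
      rw [invLen_stair _ _ _ hck]
      exact invLen_le _ _ _ hck u hu
  · rw [hword2, hset2]
    have hck : n + (bsum as m - 1) < n + bsum as m := by omega
    refine ⟨?_, stair_mem_closure _ _ _, ?_⟩
    · rw [invLen_stair _ _ _ hck, length_stair]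
    · intro u hu
      rw [invLen_stair _ _ _ hck]
      exact invLen_le _ _ _ hck u hu
end
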